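/- For every real number t, the exponential generating function of the Fibonacci-Fubini numbers satisfies Σ_{n=0}^{∞} 𝓕_n · t^n/n! = (1/√5) · (α · e^{(e^t − 1)α} − β · e^{(e^t − 1)β}), where α = (1+√5)/2 and β = (1−√5)/2; in particular the series on the left converges to this value. -/

import Mathlib

/-- Stirling numbers of the second kind. -/
def stirling2 : ℕ → ℕ → ℕ
  | 0, 0 => 1
  | 0, _ + 1 => 0
  | _ + 1, 0 => 0
  | n + 1, k + 1 => stirling2 n k + (k + 1) * stirling2 n (k + 1)

/-- Fibonacci-Fubini numbers. -/
def fibonacciFubini (n : ℕ) : ℕ :=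
  ∑ k ∈ Finset.range (n + 1), Nat.fib (k + 1) * stirling2 n k

lemma stirling2_eq_zero : ∀ n k : ℕ, n < k → stirling2 n k = 0
  | 0, _ + 1, _ => rfl
  | n + 1, k + 1, h => by
    have h' : n < k := Nat.lt_of_succ_lt_succ h
    rw [stirling2, stirling2_eq_zero n k h', stirling2_eq_zero n (k+1) (h'.trans (Nat.lt_succ_self k))]
    simp

lemma stirling_formula : ∀ (n k : ℕ),
    ∑ j ∈ Finset.range (k+1), (-1:ℝ)^j * (k.choose j : ℝ) * (j:ℝ)^n
      = (-1:ℝ)^k * (k.factorial : ℝ) * (stirling2 n k : ℝ)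
  | 0, 0 => by simp [stirling2]
  | 0, k + 1 => by
    have h := Int.alternating_sum_range_choose (n := k + 1)
    rw [if_neg (Nat.succ_ne_zero k)] at h
    have : ((∑ i ∈ Finset.range (k + 2), (-1:ℤ)^i * ((k+1).choose i : ℤ) : ℤ) : ℝ) = 0 := by
      rw [h]; norm_num
    push_cast at this
    simpa [stirling2] using this
  | n + 1, 0 => by simp [stirling2]
  | n + 1, k + 1 => by
    have hU : ∀ m : ℕ,
        ∑ j ∈ Finset.range (k+1+1), (-1:ℝ)^j * ((k+1).choose j : ℝ) * (j:ℝ)^m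
          = (∑ j ∈ Finset.range (k+1), (-1:ℝ)^j * (k.choose j : ℝ) * (j:ℝ)^m)
            - ∑ i ∈ Finset.range (k+1), (-1:ℝ)^i * (k.choose i : ℝ) * ((i:ℝ)+1)^m := by
      intro m
      rw [Finset.sum_range_succ' (fun j => (-1:ℝ)^j * ((k+1).choose j : ℝ) * (j:ℝ)^m) (k+1)]
      rw [Finset.sum_range_succ' (fun j => (-1:ℝ)^j * (k.choose j : ℝ) * (j:ℝ)^m) k]
      have hsplit : ∀ i ∈ Finset.range (k+1),
          (-1:ℝ)^(i+1) * (((k+1).choose (i+1) : ℕ) : ℝ) * ((i+1:ℕ):ℝ)^m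
            = (-1:ℝ)^(i+1) * (k.choose i : ℝ) * ((i:ℝ)+1)^m
              + (-1:ℝ)^(i+1) * (k.choose (i+1) : ℝ) * ((i:ℝ)+1)^m := by
        intro i _
        rw [Nat.choose_succ_succ]
        push_cast
        ring
      rw [Finset.sum_congr rfl hsplit, Finset.sum_add_distrib]
      have h2 : ∑ i ∈ Finset.range (k+1), (-1:ℝ)^(i+1) * (k.choose (i+1) : ℝ) * ((i:ℝ)+1)^m
          = ∑ i ∈ Finset.range k, (-1:ℝ)^(i+1) * (k.choose (i+1) : ℝ) * ((i:ℝ)+1)^m := by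
        rw [Finset.sum_range_succ, Nat.choose_succ_self]
        simp
      rw [h2]
      have h3 : ∀ i ∈ Finset.range (k+1),
          (-1:ℝ)^(i+1) * (k.choose i : ℝ) * ((i:ℝ)+1)^m
            = -((-1:ℝ)^i * (k.choose i : ℝ) * ((i:ℝ)+1)^m) := by
        intro i _; ring
      rw [Finset.sum_congr rfl h3, Finset.sum_neg_distrib]
      simp only [Nat.choose_zero_right, Nat.cast_one]
      push_cast
      ring
    -- main computation
    have key : ∑ j ∈ Finset.range (k+1+1), (-1:ℝ)^j * ((k+1).choose j : ℝ) * (j:ℝ)^(n+1)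
        = -((k:ℝ)+1) * ∑ i ∈ Finset.range (k+1), (-1:ℝ)^i * (k.choose i : ℝ) * ((i:ℝ)+1)^n := by
      rw [Finset.sum_range_succ' (fun j => (-1:ℝ)^j * ((k+1).choose j : ℝ) * (j:ℝ)^(n+1)) (k+1)]
      rw [Finset.mul_sum]
      have : ∀ i ∈ Finset.range (k+1),
          (-1:ℝ)^(i+1) * (((k+1).choose (i+1) : ℕ) : ℝ) * ((i+1:ℕ):ℝ)^(n+1)
            = -((k:ℝ)+1) * ((-1:ℝ)^i * (k.choose i : ℝ) * ((i:ℝ)+1)^n) := by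
        intro i _
        have hc : ((k+1) : ℕ) * k.choose i = (k+1).choose (i+1) * (i+1) := by
          exact Nat.add_one_mul_choose_eq k i
        have hc' : ((k:ℝ)+1) * (k.choose i : ℝ) = ((k+1).choose (i+1) : ℝ) * ((i:ℝ)+1) := by
          exact_mod_cast congrArg (fun x : ℕ => (x:ℝ)) hc
        push_cast
        push_cast at hc'
        linear_combination ((-1:ℝ)^i * ((i:ℝ)+1)^n) * hc'
      rw [Finset.sum_congr rfl this]
      simp
    have hUn : ∑ i ∈ Finset.range (k+1), (-1:ℝ)^i * (k.choose i : ℝ) * ((i:ℝ)+1)^n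
        = (∑ j ∈ Finset.range (k+1), (-1:ℝ)^j * (k.choose j : ℝ) * (j:ℝ)^n)
          - ∑ j ∈ Finset.range (k+1+1), (-1:ℝ)^j * ((k+1).choose j : ℝ) * (j:ℝ)^n := by
      linarith [hU n]
    rw [key, hUn, stirling_formula n k, stirling_formula n (k+1)]
    rw [show stirling2 (n+1) (k+1) = stirling2 n k + (k+1) * stirling2 n (k+1) from rfl]
    simp only [Nat.factorial_succ]
    push_cast
    ring

lemma hasSum_exp_real (x : ℝ) : HasSum (fun n : ℕ => x ^ n / n.factorial) (Real.exp x) := by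
  rw [Real.exp_eq_exp_ℝ]; exact NormedSpace.expSeries_div_hasSum_exp x

lemma stirling2_egf (k : ℕ) (x : ℝ) :
    HasSum (fun n : ℕ => (stirling2 n k : ℝ) * x ^ n / n.factorial)
      ((Real.exp x - 1) ^ k / k.factorial) := by
  have h1 : ∀ j : ℕ, HasSum
      (fun n : ℕ => (-1:ℝ)^j * (k.choose j : ℝ) * ((j:ℝ)^n * x^n / n.factorial))
      ((-1:ℝ)^j * (k.choose j : ℝ) * Real.exp ((j:ℝ) * x)) := by
    intro j
    have h := (hasSum_exp_real ((j:ℝ) * x)).mul_left ((-1:ℝ)^j * (k.choose j : ℝ))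
    simpa [mul_pow, mul_div_assoc] using h
  have h2 : HasSum
      (fun n : ℕ => ∑ j ∈ Finset.range (k+1),
        (-1:ℝ)^j * (k.choose j : ℝ) * ((j:ℝ)^n * x^n / n.factorial))
      (∑ j ∈ Finset.range (k+1), (-1:ℝ)^j * (k.choose j : ℝ) * Real.exp ((j:ℝ) * x)) :=
    hasSum_sum fun j _ => h1 j
  have hfun : (fun n : ℕ => ∑ j ∈ Finset.range (k+1),
        (-1:ℝ)^j * (k.choose j : ℝ) * ((j:ℝ)^n * x^n / n.factorial))
      = fun n : ℕ => ((-1:ℝ)^k * (k.factorial : ℝ)) *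
          ((stirling2 n k : ℝ) * x^n / n.factorial) := by
    funext n
    calc ∑ j ∈ Finset.range (k+1), (-1:ℝ)^j * (k.choose j : ℝ) * ((j:ℝ)^n * x^n / n.factorial)
        = (∑ j ∈ Finset.range (k+1), (-1:ℝ)^j * (k.choose j : ℝ) * (j:ℝ)^n)
            * (x^n / n.factorial) := by
          rw [Finset.sum_mul]; exact Finset.sum_congr rfl fun j _ => by ring
      _ = _ := by rw [stirling_formula n k]; ring
  have hval : (∑ j ∈ Finset.range (k+1), (-1:ℝ)^j * (k.choose j : ℝ) * Real.exp ((j:ℝ) * x))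
      = ((-1:ℝ)^k * (k.factorial : ℝ)) * ((Real.exp x - 1) ^ k / k.factorial) := by
    have hp : ((-Real.exp x) + 1) ^ k
        = ∑ j ∈ Finset.range (k+1), (-Real.exp x)^j * 1^(k-j) * (k.choose j : ℝ) :=
      add_pow (-Real.exp x) 1 k
    have hterm : ∀ j ∈ Finset.range (k+1),
        (-Real.exp x)^j * 1^(k-j) * (k.choose j : ℝ)
          = (-1:ℝ)^j * (k.choose j : ℝ) * Real.exp ((j:ℝ) * x) := by
      intro j _
      rw [Real.exp_nat_mul, one_pow, neg_pow]
      ring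
    rw [Finset.sum_congr rfl hterm] at hp
    rw [← hp]
    have hk : ((-Real.exp x) + 1) = -(Real.exp x - 1) := by ring
    rw [hk, neg_pow]
    have hfac : (k.factorial : ℝ) ≠ 0 := Nat.cast_ne_zero.mpr k.factorial_ne_zero
    field_simp
  rw [hfun, hval] at h2
  have hc : ((-1:ℝ)^k * (k.factorial : ℝ)) ≠ 0 := by
    apply mul_ne_zero (pow_ne_zero _ (by norm_num)) (Nat.cast_ne_zero.mpr k.factorial_ne_zero)
  exact (hasSum_mul_left_iff hc).mp h2

lemma fib_exp_sum (y : ℝ) :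
    HasSum (fun k : ℕ => (Nat.fib (k+1) : ℝ) * y ^ k / k.factorial)
      ((1 / Real.sqrt 5) *
        (((1 + Real.sqrt 5) / 2) * Real.exp (y * ((1 + Real.sqrt 5) / 2)) -
          ((1 - Real.sqrt 5) / 2) * Real.exp (y * ((1 - Real.sqrt 5) / 2)))) := by
  have hφ := (hasSum_exp_real (y * ((1 + Real.sqrt 5) / 2))).mul_left ((1 + Real.sqrt 5) / 2)
  have hψ := (hasSum_exp_real (y * ((1 - Real.sqrt 5) / 2))).mul_left ((1 - Real.sqrt 5) / 2)
  have h := (hφ.sub hψ).mul_left (1 / Real.sqrt 5)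
  convert h using 1
  · rfl
  funext k
  rw [Real.coe_fib_eq]
  have h5 : Real.sqrt 5 ≠ 0 := by positivity
  have hfac : (k.factorial : ℝ) ≠ 0 := Nat.cast_ne_zero.mpr k.factorial_ne_zero
  rw [mul_pow, mul_pow]
  field_simp
  ring

open Real in
theorem fibonacciFubini_egf (t : ℝ) :
    HasSum (fun n : ℕ => (fibonacciFubini n : ℝ) * t ^ n / (n.factorial : ℝ))
      ((1 / Real.sqrt 5) *
        (((1 + Real.sqrt 5) / 2) * Real.exp ((Real.exp t - 1) * ((1 + Real.sqrt 5) / 2)) -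
          ((1 - Real.sqrt 5) / 2) * Real.exp ((Real.exp t - 1) * ((1 - Real.sqrt 5) / 2)))) := by
  set f : ℕ × ℕ → ℝ :=
    fun p => (Nat.fib (p.1 + 1) : ℝ) * (stirling2 p.2 p.1 : ℝ) * t ^ p.2 / (p.2.factorial : ℝ)
    with hf
  have habs : Summable fun p : ℕ × ℕ => |f p| := by
    have heq : (fun p : ℕ × ℕ => |f p|) = fun p : ℕ × ℕ =>
        (Nat.fib (p.1 + 1) : ℝ) * ((stirling2 p.2 p.1 : ℝ) * |t| ^ p.2 / (p.2.factorial : ℝ)) := by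
      funext p
      rw [hf, abs_div, abs_mul, abs_mul, abs_pow]
      simp only [Nat.abs_cast]
      ring
    have hpos : (0 : (ℕ × ℕ) → ℝ) ≤ fun p : ℕ × ℕ =>
        (Nat.fib (p.1 + 1) : ℝ) * ((stirling2 p.2 p.1 : ℝ) * |t| ^ p.2 / (p.2.factorial : ℝ)) := by
      intro p
      have : (0:ℝ) ≤ (Nat.fib (p.1 + 1) : ℝ) * ((stirling2 p.2 p.1 : ℝ) * |t| ^ p.2 / (p.2.factorial : ℝ)) := by
        positivity
      simpa using this
    rw [heq, summable_prod_of_nonneg hpos]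
    constructor
    · exact fun k => ((stirling2_egf k |t|).mul_left ((Nat.fib (k+1) : ℝ))).summable
    have htsum : ∀ k : ℕ, ∑' n : ℕ,
        (Nat.fib (k + 1) : ℝ) * ((stirling2 n k : ℝ) * |t| ^ n / (n.factorial : ℝ))
          = (Nat.fib (k + 1) : ℝ) * ((Real.exp |t| - 1) ^ k / k.factorial) :=
      fun k => ((stirling2_egf k |t|).mul_left ((Nat.fib (k+1) : ℝ))).tsum_eq
    rw [funext htsum]
    have := (fib_exp_sum (Real.exp |t| - 1)).summable
    refine this.congr fun k => ?_
    rw [mul_div_assoc]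
  have hSf : Summable f := habs.of_abs
  have hsum : HasSum f (∑' p, f p) := hSf.hasSum
  -- row sums
  have hrow : ∀ k : ℕ, HasSum (fun n => f (k, n))
      ((Nat.fib (k + 1) : ℝ) * ((Real.exp t - 1) ^ k / k.factorial)) := by
    intro k
    have h := (stirling2_egf k t).mul_left ((Nat.fib (k + 1) : ℝ))
    refine h.congr_fun fun n => ?_
    rw [hf]; dsimp only; ring
  have hg : HasSum (fun k => (Nat.fib (k + 1) : ℝ) * ((Real.exp t - 1) ^ k / k.factorial))
      (∑' p, f p) := hsum.prod_fiberwise hrow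
  have hg' := fib_exp_sum (Real.exp t - 1)
  have hval : ∑' p, f p
      = ((1 / Real.sqrt 5) *
        (((1 + Real.sqrt 5) / 2) * Real.exp ((Real.exp t - 1) * ((1 + Real.sqrt 5) / 2)) -
          ((1 - Real.sqrt 5) / 2) * Real.exp ((Real.exp t - 1) * ((1 - Real.sqrt 5) / 2)))) := by
    refine hg.unique (hg'.congr_fun fun k => ?_)
    rw [mul_div_assoc]
  -- column sums
  have hswap : HasSum (fun q : ℕ × ℕ => f (q.2, q.1)) (∑' p, f p) :=
    ((Equiv.prodComm ℕ ℕ).hasSum_iff).mpr hsum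
  have hcol : ∀ n : ℕ, HasSum (fun k => f (k, n))
      ((fibonacciFubini n : ℝ) * t ^ n / (n.factorial : ℝ)) := by
    intro n
    have hz : ∀ k ∉ Finset.range (n + 1), f (k, n) = 0 := by
      intro k hk
      rw [hf]
      simp only
      rw [stirling2_eq_zero n k (by simpa using Finset.mem_range.not.mp hk)]
      simp
    have h := hasSum_sum_of_ne_finset_zero (L := SummationFilter.unconditional ℕ) hz
    convert h using 1
    rw [fibonacciFubini]
    push_cast
    rw [Finset.sum_mul, Finset.sum_div]
  have final := hswap.prod_fiberwise hcol
  rwa [hval] at final
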